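/- arXiv:0705.0088 — 2 statements merged into one kernel-verified Lean document; each statement's English description precedes it below -/
import Mathlib

section
/- There exist sequences a_1, a_2, ... of positive integers and p_1, p_2, ... of primes such that for all i: v_{p_i}(2a_i^2+1) is odd and p_i ≡ 3 (mod 4), v_{p_i}(2a_i^4+4a_i^2+1) = 0; and for all j ≠ i: v_{p_i}(2a_j^2+1) = 0 and v_{p_i}(2a_j^4+4a_j^2+1) = 0. -/
/-- The auxiliary sequence: `A 0 = 1`, `A (n+1) = A n * (2 * A n ^ 2 + 1)`. -/
def Aseq : ℕ → ℕ
  | 0 => 1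
  | n + 1 => Aseq n * (2 * Aseq n ^ 2 + 1)

lemma Aseq_pos (n : ℕ) : 0 < Aseq n := by
  induction n with
  | zero => simp [Aseq]
  | succ n ih =>
    show 0 < Aseq n * (2 * Aseq n ^ 2 + 1)
    exact Nat.mul_pos ih (by positivity)

lemma Aseq_odd (n : ℕ) : Odd (Aseq n) := by
  induction n with
  | zero => simp [Aseq]
  | succ n ih => exact Odd.mul ih ⟨Aseq n ^ 2, by ring⟩

lemma Aseq_dvd {i j : ℕ} (h : i < j) : (2 * Aseq i ^ 2 + 1) ∣ Aseq j := by
  induction j, h using Nat.le_induction with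
  | base => exact Dvd.intro_left _ rfl
  | succ j hij ih => exact ih.mul_right _

/-- If every prime `q ≡ 3 [MOD 4]` divides the odd number `N` to even multiplicity,
then `N ≡ 1 [MOD 4]`. -/
lemma key (N : ℕ) : Odd N →
    (∀ q : ℕ, q.Prime → q % 4 = 3 → Even (padicValNat q N)) → N % 4 = 1 := by
  induction N using Nat.strong_induction_on with
  | _ N ih =>
    intro hodd h
    have hN0 : N ≠ 0 := by
      have := Nat.odd_iff.mp hodd; omega
    by_cases h1 : N = 1
    · simp [h1]
    have hp : N.minFac.Prime := Nat.minFac_prime h1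
    have hpd : N.minFac ∣ N := Nat.minFac_dvd N
    set p := N.minFac with hpdef
    have hp2 : p % 2 = 1 := by
      have h2le := hp.two_le
      by_contra hc
      have h2 : 2 ∣ p := by omega
      rcases hp.eq_one_or_self_of_dvd 2 h2 with h2' | h2'
      · omega
      · have : 2 ∣ N := h2' ▸ hpd
        rw [Nat.odd_iff] at hodd
        omega
    have hp4 : p % 4 = 1 ∨ p % 4 = 3 := by omega
    haveI : Fact p.Prime := ⟨hp⟩
    rcases hp4 with hp4 | hp4
    · -- p ≡ 1 mod 4
      obtain ⟨M, hM⟩ := hpd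
      have hM0 : M ≠ 0 := by rintro rfl; simp at hM; exact hN0 hM
      have hMlt : M < N := by
        have h2 : 2 ≤ p := hp.two_le
        calc M < 2 * M := by omega
        _ ≤ p * M := Nat.mul_le_mul_right M h2
        _ = N := hM.symm
      have hModd : Odd M := by
        rw [hM, Nat.odd_mul] at hodd; exact hodd.2
      have hMval : ∀ q : ℕ, q.Prime → q % 4 = 3 → Even (padicValNat q M) := by
        intro q hq hq4
        haveI : Fact q.Prime := ⟨hq⟩
        have hqp : q ≠ p := by rintro rfl; omega
        have := h q hq hq4
        rw [hM, padicValNat.mul hp.pos.ne' hM0,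
          padicValNat.eq_zero_of_not_dvd (by
            intro hd
            exact hqp ((Nat.prime_dvd_prime_iff_eq hq hp).mp hd))] at this
        simpa using this
      have hM4 := ih M hMlt hModd hMval
      calc N % 4 = (p % 4) * (M % 4) % 4 := by rw [hM, Nat.mul_mod]
      _ = 1 := by rw [hp4, hM4]
    · -- p ≡ 3 mod 4
      have hvpos : 1 ≤ padicValNat p N :=
        one_le_padicValNat_of_dvd hN0 hpd
      have hveven := h p hp hp4
      have hv2 : 2 ≤ padicValNat p N := by
        rcases hveven with ⟨k, hk⟩; omega
      have hp2dvd : p ^ 2 ∣ N :=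
        dvd_trans (pow_dvd_pow p hv2) pow_padicValNat_dvd
      obtain ⟨M, hM⟩ := hp2dvd
      have hM0 : M ≠ 0 := by rintro rfl; simp at hM; exact hN0 hM
      have hMlt : M < N := by
        have h2 : 2 ≤ p := hp.two_le
        have h4 : 4 ≤ p ^ 2 := by nlinarith
        calc M < 4 * M := by omega
        _ ≤ p ^ 2 * M := Nat.mul_le_mul_right M h4
        _ = N := hM.symm
      have hModd : Odd M := by
        rw [hM, Nat.odd_mul] at hodd; exact hodd.2
      have hMval : ∀ q : ℕ, q.Prime → q % 4 = 3 → Even (padicValNat q M) := by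
        intro q hq hq4
        haveI : Fact q.Prime := ⟨hq⟩
        have := h q hq hq4
        rw [hM, padicValNat.mul (pow_ne_zero 2 hp.pos.ne') hM0] at this
        by_cases hqp : q = p
        · subst hqp
          rw [padicValNat.prime_pow] at this
          rcases this with ⟨k, hk⟩
          exact ⟨k - 1, by omega⟩
        · rw [padicValNat.eq_zero_of_not_dvd (by
            intro hd
            exact hqp ((Nat.prime_dvd_prime_iff_eq hq hp).mp (hq.dvd_of_dvd_pow hd)))] at this
          simpa using this
      have hM4 := ih M hMlt hModd hMval
      have hsq : p ^ 2 % 4 = 1 := by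
        have : p ^ 2 % 4 = (p % 4) ^ 2 % 4 := Nat.pow_mod p 2 4
        rw [hp4] at this
        omega
      calc N % 4 = (p ^ 2 * M) % 4 := by rw [hM]
      _ = (p ^ 2 % 4) * (M % 4) % 4 := Nat.mul_mod _ _ _
      _ = 1 := by rw [hsq, hM4]

lemma exists_good_prime (N : ℕ) (hodd : Odd N) (h4 : N % 4 = 3) :
    ∃ q : ℕ, q.Prime ∧ q % 4 = 3 ∧ Odd (padicValNat q N) := by
  by_contra hc
  push_neg at hc
  have : ∀ q : ℕ, q.Prime → q % 4 = 3 → Even (padicValNat q N) := by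
    intro q hq hq4
    exact Nat.not_odd_iff_even.mp (hc q hq hq4)
  have := key N hodd this
  omega

lemma Nmod4 (n : ℕ) : (2 * Aseq n ^ 2 + 1) % 4 = 3 := by
  obtain ⟨k, hk⟩ := Aseq_odd n
  have : 2 * Aseq n ^ 2 + 1 = 3 + (2 * k ^ 2 + 2 * k) * 4 := by rw [hk]; ring
  rw [this, Nat.add_mul_mod_self_right]

lemma padicValInt_natCast (p n : ℕ) : padicValInt p (n : ℤ) = padicValNat p n := by
  simp [padicValInt]

lemma dvd_succ_absurd {p m : ℕ} (hp : p.Prime) (hd : p ∣ m) (h : p ∣ m + 1) : False := by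
  have := (Nat.dvd_add_right hd).mp h
  exact hp.one_lt.ne' (Nat.dvd_one.mp this)

lemma quad_quartic_absurd {p x : ℕ} (hp : p.Prime) (h1 : p ∣ 2 * x ^ 2 + 1)
    (h2 : p ∣ 2 * x ^ 4 + 4 * x ^ 2 + 1) : False := by
  have ha : p ∣ 2 * (2 * x ^ 4 + 4 * x ^ 2 + 1) + 1 := by
    have he : 2 * (2 * x ^ 4 + 4 * x ^ 2 + 1) + 1 = (2 * x ^ 2 + 1) * (2 * x ^ 2 + 3) := by
      ring
    rw [he]; exact h1.mul_right _
  exact dvd_succ_absurd hp (h2.mul_left 2) ha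

theorem exists_dual_primes :
    ∃ (a : ℕ → ℤ) (p : ℕ → ℕ),
      (∀ i, 0 < a i) ∧ (∀ i, (p i).Prime) ∧
      (∀ i, Odd (padicValInt (p i) (2 * a i ^ 2 + 1)) ∧ p i % 4 = 3 ∧
        padicValInt (p i) (2 * a i ^ 4 + 4 * a i ^ 2 + 1) = 0) ∧
      (∀ i j, i ≠ j → padicValInt (p i) (2 * a j ^ 2 + 1) = 0 ∧
        padicValInt (p i) (2 * a j ^ 4 + 4 * a j ^ 2 + 1) = 0) := by
  classical
  have hex : ∀ n, ∃ q : ℕ, q.Prime ∧ q % 4 = 3 ∧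
      Odd (padicValNat q (2 * Aseq n ^ 2 + 1)) := by
    intro n
    exact exists_good_prime _ ⟨Aseq n ^ 2, by ring⟩ (Nmod4 n)
  refine ⟨fun n => (Aseq n : ℤ), fun n => (hex n).choose, ?_, ?_, ?_, ?_⟩
  · intro i; exact Int.natCast_pos.mpr (Aseq_pos i)
  · intro i; exact (hex i).choose_spec.1
  · intro i
    obtain ⟨hp, h4, hodd⟩ := (hex i).choose_spec
    set p := (hex i).choose
    have hpdvd : p ∣ 2 * Aseq i ^ 2 + 1 := by
      haveI : Fact p.Prime := ⟨hp⟩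
      apply dvd_of_one_le_padicValNat
      rw [Nat.odd_iff] at hodd; omega
    refine ⟨?_, h4, ?_⟩
    · have hcast : (2 * ((Aseq i : ℤ)) ^ 2 + 1) = ((2 * Aseq i ^ 2 + 1 : ℕ) : ℤ) := by
        push_cast; ring
      rw [hcast, padicValInt_natCast]; exact hodd
    · have hcast : (2 * ((Aseq i : ℤ)) ^ 4 + 4 * ((Aseq i : ℤ)) ^ 2 + 1)
          = ((2 * Aseq i ^ 4 + 4 * Aseq i ^ 2 + 1 : ℕ) : ℤ) := by
        push_cast; ring
      rw [hcast, padicValInt_natCast]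
      apply padicValNat.eq_zero_of_not_dvd
      intro hdvd
      exact quad_quartic_absurd hp hpdvd hdvd
  · intro i j hij
    obtain ⟨hp, h4, hodd⟩ := (hex i).choose_spec
    set p := (hex i).choose
    haveI : Fact p.Prime := ⟨hp⟩
    have hpdvd : p ∣ 2 * Aseq i ^ 2 + 1 := by
      apply dvd_of_one_le_padicValNat
      rw [Nat.odd_iff] at hodd; omega
    have hcast2 : (2 * ((Aseq j : ℤ)) ^ 2 + 1) = ((2 * Aseq j ^ 2 + 1 : ℕ) : ℤ) := by
      push_cast; ring
    have hcast4 : (2 * ((Aseq j : ℤ)) ^ 4 + 4 * ((Aseq j : ℤ)) ^ 2 + 1)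
        = ((2 * Aseq j ^ 4 + 4 * Aseq j ^ 2 + 1 : ℕ) : ℤ) := by
      push_cast; ring
    rw [hcast2, hcast4, padicValInt_natCast, padicValInt_natCast]
    rcases hij.lt_or_gt with hlt | hlt
    · -- i < j : p divides Aseq j
      have hAj : p ∣ Aseq j := hpdvd.trans (Aseq_dvd hlt)
      have hAj2 : p ∣ Aseq j ^ 2 := dvd_pow hAj two_ne_zero
      have hAj4 : p ∣ Aseq j ^ 4 := dvd_pow hAj four_ne_zero
      constructor
      · apply padicValNat.eq_zero_of_not_dvd
        intro hd
        exact dvd_succ_absurd hp (hAj2.mul_left 2) hd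
      · apply padicValNat.eq_zero_of_not_dvd
        intro hd
        exact dvd_succ_absurd hp (dvd_add (hAj4.mul_left 2) (hAj2.mul_left 4)) hd
    · -- j < i
      constructor
      · apply padicValNat.eq_zero_of_not_dvd
        intro hd
        have hAi : p ∣ Aseq i := hd.trans (Aseq_dvd hlt)
        exact dvd_succ_absurd hp ((dvd_pow hAi two_ne_zero).mul_left 2) hpdvd
      · apply padicValNat.eq_zero_of_not_dvd
        intro hd
        -- quadratic reciprocity style argument in ZMod p
        set ai : ZMod p := (Aseq i : ZMod p)
        set aj : ZMod p := (Aseq j : ZMod p)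
        have h1 : 2 * ai ^ 2 + 1 = 0 := by
          have := (ZMod.natCast_eq_zero_iff _ p).mpr hpdvd
          push_cast at this
          exact this
        have h2 : 2 * aj ^ 4 + 4 * aj ^ 2 + 1 = 0 := by
          have := (ZMod.natCast_eq_zero_iff _ p).mpr hd
          push_cast at this
          exact this
        have hc : (2 * aj ^ 2 + 1 : ZMod p) ≠ 0 := by
          intro h0
          have : ((2 * Aseq j ^ 2 + 1 : ℕ) : ZMod p) = 0 := by push_cast; exact h0
          exact quad_quartic_absurd hp
            ((ZMod.natCast_eq_zero_iff _ p).mp this) hd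
        have hsq : (2 * ai * aj ^ 2) ^ 2 = -(2 * aj ^ 2 + 1) ^ 2 := by
          linear_combination (2 * aj ^ 4) * h1 + h2
        have hm1 : IsSquare (-1 : ZMod p) := by
          refine ⟨(2 * ai * aj ^ 2) * (2 * aj ^ 2 + 1)⁻¹, ?_⟩
          have : ((2 * ai * aj ^ 2) * (2 * aj ^ 2 + 1)⁻¹) *
              ((2 * ai * aj ^ 2) * (2 * aj ^ 2 + 1)⁻¹) = -1 := by
            calc ((2 * ai * aj ^ 2) * (2 * aj ^ 2 + 1)⁻¹) *
                ((2 * ai * aj ^ 2) * (2 * aj ^ 2 + 1)⁻¹)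
                = ((2 * ai * aj ^ 2) ^ 2) * ((2 * aj ^ 2 + 1)⁻¹) ^ 2 := by ring
              _ = (-(2 * aj ^ 2 + 1) ^ 2) * ((2 * aj ^ 2 + 1)⁻¹) ^ 2 := by rw [hsq]
              _ = -((2 * aj ^ 2 + 1) * (2 * aj ^ 2 + 1)⁻¹) ^ 2 := by ring
              _ = -1 := by rw [mul_inv_cancel₀ hc]; ring
          exact this.symm
        exact (ZMod.exists_sq_eq_neg_one_iff.mp hm1) h4
end

section
/- For all positive integers i in the sequence constructed from Pell-equation arguments (a_1 = 1, and a_n an odd multiple of ∏_{j<n}(2a_j^2+1)(2a_j^4+4a_j^2+1) with 2a_n^2+1 not a square), the rational numbers (2a_i^2+1)(2a_i^4+4a_i^2+1), i = 1, 2, ..., are multiplicatively independent in Q^× modulo norms from Q(i)^×: no nontrivial product ∏_i ((2a_i^2+1)(2a_i^4+4a_i^2+1))^{ε_i} with ε_i ∈ {0,1} is a norm from Q(i)^×. -/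
/-- Any natural number `≡ 3 mod 4` has a prime factor `p ≡ 3 mod 4` with odd multiplicity. -/
lemma exists_prime_three_mod_four_odd_val {m : ℕ} (hm : m % 4 = 3) :
    ∃ p : ℕ, p.Prime ∧ p % 4 = 3 ∧ Odd (padicValNat p m) := by
  by_contra hcon
  push_neg at hcon
  have hm0 : m ≠ 0 := by omega
  have hmodd : m % 2 = 1 := by omega
  have key : (m : ZMod 4) = 1 := by
    conv_lhs => rw [← Nat.factorization_prod_pow_eq_self hm0]
    rw [Finsupp.prod, Nat.cast_prod]
    apply Finset.prod_eq_one
    intro p hp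
    have hpp : p.Prime := Nat.prime_of_mem_primeFactors (by
      simpa [Nat.support_factorization] using hp)
    have hpdvd : p ∣ m := Nat.dvd_of_mem_primeFactors (by
      simpa [Nat.support_factorization] using hp)
    have hpodd : p % 2 = 1 := by
      rcases hpp.eq_two_or_odd with h2 | h1
      · subst h2; omega
      · exact h1
    rw [Nat.cast_pow]
    have hcast : ((p : ℕ) : ZMod 4) = ((p % 4 : ℕ) : ZMod 4) := (ZMod.natCast_mod p 4).symm
    rcases Nat.odd_mod_four_iff.mp hpodd with h1 | h3
    · rw [hcast, h1]; norm_num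
    · have heven : Even (m.factorization p) := by
        rw [Nat.factorization_def m hpp]
        exact Nat.not_odd_iff_even.mp (hcon p hpp h3)
      obtain ⟨t, ht⟩ := heven
      have h9 : ((3 : ℕ) : ZMod 4) ^ 2 = 1 := by decide
      rw [hcast, h3, ht, ← two_mul, pow_mul, h9, one_pow]
  have : ((m % 4 : ℕ) : ZMod 4) = 1 := by rwa [ZMod.natCast_mod]
  rw [hm] at this
  exact absurd this (by decide)

/-- A positive integer that is a sum of two rational squares has even `p`-adic valuation
at every prime `p ≡ 3 mod 4`. -/
lemma even_padicValNat_of_sum_two_rat_squares {N : ℤ} (hN : 0 < N) {u v : ℚ}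
    (h : (N : ℚ) = u ^ 2 + v ^ 2) {q : ℕ} (hq : q.Prime) (h3 : q % 4 = 3) :
    Even (padicValNat q N.natAbs) := by
  haveI : Fact q.Prime := ⟨hq⟩
  set x : ℤ := u.num * v.den with hxdef
  set y : ℤ := v.num * u.den with hydef
  set d : ℕ := u.den * v.den with hddef
  have hd0 : d ≠ 0 := Nat.mul_ne_zero u.den_nz v.den_nz
  have hu : (u.num : ℚ) = u * u.den := by
    rw [Rat.mul_den_eq_num]
  have hv : (v.num : ℚ) = v * v.den := by
    rw [Rat.mul_den_eq_num]
  have hZ : N * (d : ℤ) ^ 2 = x ^ 2 + y ^ 2 := by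
    have : (N : ℚ) * (d : ℚ) ^ 2 = (x : ℚ) ^ 2 + (y : ℚ) ^ 2 := by
      rw [h, hxdef, hydef, hddef]
      push_cast
      rw [hu, hv]
      ring
    exact_mod_cast this
  have hNat : N.natAbs * d ^ 2 = x.natAbs ^ 2 + y.natAbs ^ 2 := by
    have h2 : ((N.natAbs * d ^ 2 : ℕ) : ℤ) = ((x.natAbs ^ 2 + y.natAbs ^ 2 : ℕ) : ℤ) := by
      push_cast
      rw [sq_abs, sq_abs, abs_of_nonneg hN.le]
      exact hZ
    exact_mod_cast h2
  have heven : Even (padicValNat q (N.natAbs * d ^ 2)) :=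
    by
      by_cases hqm : q ∈ (N.natAbs * d ^ 2).primeFactors
      · exact Nat.eq_sq_add_sq_iff.mp ⟨x.natAbs, y.natAbs, hNat⟩ q hqm h3
      · have hnd : ¬ q ∣ N.natAbs * d ^ 2 := fun hdv => hqm (Nat.mem_primeFactors.mpr
          ⟨hq, hdv, mul_ne_zero (Int.natAbs_ne_zero.mpr hN.ne') (pow_ne_zero 2 hd0)⟩)
        rw [padicValNat.eq_zero_of_not_dvd hnd]; exact Even.zero
  have hN0 : N.natAbs ≠ 0 := Int.natAbs_ne_zero.mpr hN.ne'
  rw [padicValNat.mul hN0 (pow_ne_zero 2 hd0), padicValNat.pow d 2] at heven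
  obtain ⟨t, ht⟩ := heven
  exact ⟨t - padicValNat q d, by omega⟩

/-- For the sequence constructed from Pell-equation arguments (`a 1 = 1`, and for
`n ≥ 2` the term `a n` is an odd multiple of `∏_{1 ≤ j < n} (2a_j²+1)(2a_j⁴+4a_j²+1)`
with `2a_n²+1` not a square), the rationals `(2a_i²+1)(2a_i⁴+4a_i²+1)`, `i ≥ 1`, are
multiplicatively independent in `ℚ^×` modulo norms from `ℚ(i)^×`: no nonempty
product of distinct such factors is a norm `z·z̄ = u² + v²` from `ℚ(i)^×`. -/
theorem independent_modulo_norms (a : ℕ → ℤ)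
    (hpos : ∀ n, 1 ≤ n → 0 < a n) (ha1 : a 1 = 1)
    (hmult : ∀ n, 2 ≤ n → ∃ k : ℤ, Odd k ∧
      a n = k * ∏ j ∈ Finset.Ico 1 n,
        ((2 * a j ^ 2 + 1) * (2 * a j ^ 4 + 4 * a j ^ 2 + 1)))
    (hnsq : ∀ n, 1 ≤ n → ¬ IsSquare (2 * a n ^ 2 + 1)) :
    ∀ s : Finset ℕ, s.Nonempty → (∀ i ∈ s, 1 ≤ i) →
      ¬ ∃ u v : ℚ,
        (∏ i ∈ s, ((2 * (a i : ℚ) ^ 2 + 1) * (2 * (a i : ℚ) ^ 4 + 4 * (a i : ℚ) ^ 2 + 1)))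
          = u ^ 2 + v ^ 2 := by
  intro s hs hs1
  rintro ⟨u, v, huv⟩
  set F : ℕ → ℤ := fun i => (2 * a i ^ 2 + 1) * (2 * a i ^ 4 + 4 * a i ^ 2 + 1) with hF
  have hFpos : ∀ i, 0 < F i := by
    intro i
    have h1 : 0 < 2 * a i ^ 2 + 1 := by positivity
    have h2 : 0 < 2 * a i ^ 4 + 4 * a i ^ 2 + 1 := by positivity
    exact mul_pos h1 h2
  have hFodd : ∀ i, Odd (F i) := by
    intro i
    exact Odd.mul ⟨a i ^ 2, by ring⟩ ⟨a i ^ 4 + 2 * a i ^ 2, by ring⟩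
  set N : ℤ := ∏ i ∈ s, F i with hNdef
  have hNpos : 0 < N := Finset.prod_pos fun i _ => hFpos i
  have hNcast : (N : ℚ) = u ^ 2 + v ^ 2 := by
    rw [← huv, hNdef]
    push_cast
    exact Finset.prod_congr rfl fun i _ => by rw [hF]; push_cast; ring
  -- the maximal element
  set n := s.max' hs with hn
  have hns : n ∈ s := s.max'_mem hs
  have hn1 : 1 ≤ n := hs1 n hns
  have hmax : ∀ j ∈ s, j ≤ n := fun j hj => s.le_max' j hj
  -- a n is odd
  have hanodd : Odd (a n) := by
    rcases eq_or_lt_of_le hn1 with h1 | h2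
    · rw [← h1, ha1]; exact odd_one
    · obtain ⟨k, hk, hkeq⟩ := hmult n h2
      rw [hkeq]
      exact hk.mul (Finset.prod_induction _ Odd (fun _ _ => Odd.mul) odd_one
        (fun j _ => hFodd j))
  -- A = 2 a n ^ 2 + 1 ≡ 3 mod 4
  set A : ℤ := 2 * a n ^ 2 + 1 with hA
  have hApos : 0 < A := by positivity
  have hAmod : A.natAbs % 4 = 3 := by
    obtain ⟨m, hm⟩ := hanodd
    have hm0 : 0 ≤ m := by
      have := hpos n hn1
      omega
    have hAval : A = 8 * m ^ 2 + 8 * m + 3 := by rw [hA, hm]; ring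
    have ht : 0 ≤ m ^ 2 := sq_nonneg m
    set t := m ^ 2
    have : (A.natAbs : ℤ) = A := Int.natAbs_of_nonneg hApos.le
    omega
  obtain ⟨p, hp, hp3, hpodd⟩ := exists_prime_three_mod_four_odd_val hAmod
  haveI : Fact p.Prime := ⟨hp⟩
  have hdvdIff : ∀ z : ℤ, p ∣ z.natAbs ↔ (p : ℤ) ∣ z := fun z => by
    rw [← Int.natAbs_dvd_natAbs]; simp
  have hpInt : Prime (p : ℤ) := Nat.prime_iff_prime_int.mp hp
  -- p divides A
  have hpA : (p : ℤ) ∣ A := by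
    have : padicValNat p A.natAbs ≠ 0 := by
      rcases hpodd with ⟨t, ht⟩; omega
    have hdvd : p ∣ A.natAbs := by
      by_contra hnd
      exact this (padicValNat.eq_zero_of_not_dvd hnd)
    exact (hdvdIff A).mp hdvd
  -- p does not divide a n
  have hpan : ¬ (p : ℤ) ∣ a n := by
    intro hdvd
    have h1 : (p : ℤ) ∣ 1 := by
      have : (p : ℤ) ∣ 2 * a n ^ 2 := Dvd.dvd.mul_left (hdvd.pow two_ne_zero) 2
      have := dvd_sub hpA this
      simpa [hA] using this
    exact hpInt.not_unit (isUnit_of_dvd_one h1)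
  -- B = second factor, p does not divide B
  set B : ℤ := 2 * a n ^ 4 + 4 * a n ^ 2 + 1 with hB
  have hBpos : 0 < B := by positivity
  have hpB : ¬ (p : ℤ) ∣ B := by
    intro hdvd
    have h1 : (p : ℤ) ∣ 1 := by
      have key : A * (2 * a n ^ 2 + 3) - 2 * B = 1 := by rw [hA, hB]; ring
      have : (p : ℤ) ∣ A * (2 * a n ^ 2 + 3) - 2 * B :=
        dvd_sub (hpA.mul_right _) (hdvd.mul_left 2)
      rwa [key] at this
    exact hpInt.not_unit (isUnit_of_dvd_one h1)
  -- p does not divide any other factor F j, j ∈ s.erase n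
  set M : ℤ := ∏ j ∈ s.erase n, F j with hM
  have hMpos : 0 < M := Finset.prod_pos fun i _ => hFpos i
  have hpM : ¬ (p : ℤ) ∣ M := by
    intro hdvd
    obtain ⟨j, hj, hpFj⟩ := (Prime.dvd_finset_prod_iff hpInt F).mp hdvd
    have hjs : j ∈ s := Finset.mem_of_mem_erase hj
    have hjn : j ≠ n := Finset.ne_of_mem_erase hj
    have hjlt : j < n := lt_of_le_of_ne (hmax j hjs) hjn
    have hj1 : 1 ≤ j := hs1 j hjs
    have hn2 : 2 ≤ n := by omega
    obtain ⟨k, hk, hkeq⟩ := hmult n hn2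
    have hFdvd : F j ∣ a n := by
      rw [hkeq]
      exact Dvd.dvd.mul_left
        (Finset.dvd_prod_of_mem F (Finset.mem_Ico.mpr ⟨hj1, hjlt⟩)) k
    exact hpan (hpFj.trans hFdvd)
  -- N = F n * M
  have hNsplit : N = A * B * M := by
    rw [hNdef, ← Finset.mul_prod_erase s F hns, hF]
  -- valuation of N at p is odd
  have hNodd : Odd (padicValNat p N.natAbs) := by
    rw [hNsplit, Int.natAbs_mul, Int.natAbs_mul]
    rw [padicValNat.mul (Nat.mul_ne_zero (Int.natAbs_ne_zero.mpr hApos.ne')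
          (Int.natAbs_ne_zero.mpr hBpos.ne')) (Int.natAbs_ne_zero.mpr hMpos.ne'),
        padicValNat.mul (Int.natAbs_ne_zero.mpr hApos.ne')
          (Int.natAbs_ne_zero.mpr hBpos.ne')]
    have hvB : padicValNat p B.natAbs = 0 := by
      apply padicValNat.eq_zero_of_not_dvd
      intro hdvd
      exact hpB ((hdvdIff B).mp hdvd)
    have hvM : padicValNat p M.natAbs = 0 := by
      apply padicValNat.eq_zero_of_not_dvd
      intro hdvd
      exact hpM ((hdvdIff M).mp hdvd)
    rw [hvB, hvM]
    simpa using hpodd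
  exact (Nat.not_even_iff_odd.mpr hNodd)
    (even_padicValNat_of_sum_two_rat_squares hNpos hNcast hp hp3)
end
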